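/- Flipping condition (flip): in the discrete auto rate-tuning model, suppose R(i) > 1 at time step i. Then the ratio flips in the next step, i.e. R(i+1) < 1, if and only if the learning rate satisfies λ(i) > κ(i). -/

import Mathlib

/-- Flipping condition (flip): if `R i > 1`, then `R (i+1) < 1` iff the
learning rate exceeds the flipping ratio. -/
theorem elr_ratio_flip_iff
    (cl ck : ℝ) (hcl : 0 < cl) (hck : 0 < ck)
    (lam : ℕ → ℝ) (hlam : ∀ i, 0 < lam i)
    (sl sk : ℕ → ℝ) (hsl0 : 0 < sl 0) (hsk0 : 0 < sk 0)
    (hsl : ∀ i, sl (i + 1) = sl i + (lam i) ^ 2 * cl ^ 2 / sl i)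
    (hsk : ∀ i, sk (i + 1) = sk i + (lam i) ^ 2 * ck ^ 2 / sk i)
    (R : ℕ → ℝ) (hR : ∀ i, R i = cl * sk i / (ck * sl i))
    (kap : ℕ → ℝ)
    (hkap : ∀ i, kap i = Real.sqrt (sl i) * Real.sqrt (sk i) / Real.sqrt (cl * ck))
    (i : ℕ) (hRi : 1 < R i) :
    R (i + 1) < 1 ↔ kap i < lam i := by
  have psl : ∀ j, 0 < sl j := by
    intro j
    induction j with
    | zero => exact hsl0
    | succ n ih => rw [hsl]; have := hlam n; positivity
  have psk : ∀ j, 0 < sk j := by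
    intro j
    induction j with
    | zero => exact hsk0
    | succ n ih => rw [hsk]; have := hlam n; positivity
  have hA := psl i
  have hB := psk i
  have hA' := psl (i + 1)
  have hB' := psk (i + 1)
  have hL := hlam i
  -- R i > 1 gives cl * sk i > ck * sl i
  have hd : ck * sl i < cl * sk i := by
    rw [hR i, lt_div_iff₀ (by positivity)] at hRi
    linarith
  -- step 1: R(i+1) < 1 ↔ cl * sk (i+1) < ck * sl (i+1)
  have step1 : R (i + 1) < 1 ↔ cl * sk (i + 1) < ck * sl (i + 1) := by
    rw [hR (i + 1), div_lt_one (by positivity)]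
  -- step 2: reduce to sl i * sk i < lam i ^ 2 * (cl * ck)
  have step2 : cl * sk (i + 1) < ck * sl (i + 1) ↔
      sl i * sk i < lam i ^ 2 * (cl * ck) := by
    have e1 : cl * (sk i + lam i ^ 2 * ck ^ 2 / sk i) * (sl i * sk i)
        = cl * sl i * (sk i) ^ 2 + lam i ^ 2 * ck ^ 2 * cl * sl i := by
      field_simp
    have e2 : ck * (sl i + lam i ^ 2 * cl ^ 2 / sl i) * (sl i * sk i)
        = ck * (sl i) ^ 2 * sk i + lam i ^ 2 * cl ^ 2 * ck * sk i := by
      field_simp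
    rw [hsl i, hsk i, ← mul_lt_mul_iff_of_pos_right (mul_pos hA hB), e1, e2]
    constructor
    · intro h
      nlinarith [mul_pos hA hB, sq_nonneg (lam i)]
    · intro h
      nlinarith [mul_pos hA hB, sq_nonneg (lam i)]
  -- step 3: kap i < lam i ↔ sl i * sk i < lam i ^ 2 * (cl * ck)
  have hkapsq : kap i ^ 2 = sl i * sk i / (cl * ck) := by
    rw [hkap i, div_pow, mul_pow, Real.sq_sqrt (le_of_lt hA),
      Real.sq_sqrt (le_of_lt hB), Real.sq_sqrt (by positivity : (0:ℝ) ≤ cl * ck)]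
  have hkapnn : 0 ≤ kap i := by
    rw [hkap i]; positivity
  have step3 : kap i < lam i ↔ sl i * sk i < lam i ^ 2 * (cl * ck) := by
    rw [← div_lt_iff₀ (by positivity : (0:ℝ) < cl * ck), ← hkapsq]
    constructor
    · intro h; nlinarith
    · intro h; nlinarith
  rw [step1, step2, step3]
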